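/- Online mirror descent regret bound: Let Q ⊆ ℝᵈ be compact convex, φ : Q → ℝ a μ-strongly convex DGF with respect to a norm ‖·‖, and η > 0. Given reward vectors w₁,…,w_T, predictions m₁,…,m_T, iterates x_t = Π_φ(η m_t, x̃_t), x̃_{t+1} = Π_φ(η w_t, x̃_t) with x̃₁ = argmin_{x∈Q} φ(x). Then for every x* ∈ Q, Σ_{t=1}^T ⟨x* − x_t, w_t⟩ ≤ D_φ(x*, x̃₁)/η + (η/(2μ)) Σ_{t=1}^T ‖w_t − m_t‖_*². -/

import Mathlib

open RealInnerProductSpace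

set_option linter.unusedSectionVars false

private lemma aux_slope {f g : ℝ → ℝ} {f' L : ℝ} (hf : HasDerivAt f f' 0)
    (h : ∀ s ∈ Set.Ioc (0:ℝ) 1, f s - f 0 ≤ s * g s)
    (hg : Filter.Tendsto g (nhdsWithin 0 (Set.Ioi 0)) (nhds L)) : f' ≤ L := by
  have h1 : Filter.Tendsto (slope f 0) (nhdsWithin 0 (Set.Ioi 0)) (nhds f') :=
    (hasDerivAt_iff_tendsto_slope.mp hf).mono_left
      (nhdsWithin_mono _ (fun s hs => ne_of_gt hs))
  refine le_of_tendsto_of_tendsto h1 hg ?_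
  filter_upwards [Ioc_mem_nhdsGT_of_mem (by norm_num : (0:ℝ) ∈ Set.Ico (0:ℝ) 1)] with s hs
  have hs0 : (0:ℝ) < s := hs.1
  rw [slope_def_field, sub_zero, div_le_iff₀ hs0]
  have := h s hs
  have := mul_comm s (g s)
  linarith

private lemma aux_dirderiv {d : ℕ} {φ : EuclideanSpace ℝ (Fin d) → ℝ}
    {g b v : EuclideanSpace ℝ (Fin d)} (h : HasGradientAt φ g b) :
    HasDerivAt (fun s : ℝ => φ (b + s • v)) ⟪g, v⟫ 0 := by
  have hline : HasDerivAt (fun s : ℝ => b + s • v) v 0 := by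
    simpa using ((hasDerivAt_id (0:ℝ)).smul_const v).const_add b
  have h2 : HasFDerivAt φ (InnerProductSpace.toDual ℝ _ g) (b + (0:ℝ) • v) := by
    simpa using h.hasFDerivAt
  simpa [Function.comp_def] using h2.comp_hasDerivAt 0 hline


section
variable {d : ℕ} {N : EuclideanSpace ℝ (Fin d) → ℝ}
  (hN0 : ∀ v, N v = 0 ↔ v = 0)
  (hNsmul : ∀ (a : ℝ) (v : EuclideanSpace ℝ (Fin d)), N (a • v) = |a| * N v)
  (hNtri : ∀ u v, N (u + v) ≤ N u + N v)

include hN0 hNsmul hNtri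

private lemma aux_Nnonneg : ∀ v, 0 ≤ N v := by
  intro v
  have h1 : N 0 = 0 := (hN0 0).mpr rfl
  have h2 := hNtri v (-v)
  have h3 : N (-v) = N v := by simpa using hNsmul (-1) v
  simp at h2
  linarith

private lemma aux_Nsum {ι : Type*} (s : Finset ι) (f : ι → EuclideanSpace ℝ (Fin d)) :
    N (∑ i ∈ s, f i) ≤ ∑ i ∈ s, N (f i) := by
  classical
  induction s using Finset.induction with
  | empty => simp [(hN0 0).mpr rfl]
  | insert _ _ hx ih =>
    rw [Finset.sum_insert hx, Finset.sum_insert hx]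
    exact le_trans (hNtri _ _) (by linarith)

private lemma aux_Nle : ∃ C : ℝ, 0 ≤ C ∧ ∀ v, N v ≤ C * ‖v‖ := by
  classical
  refine ⟨∑ i : Fin d, N (EuclideanSpace.single i 1), Finset.sum_nonneg fun i _ =>
    aux_Nnonneg hN0 hNsmul hNtri _, fun v => ?_⟩
  have hv : v = ∑ i : Fin d, v i • EuclideanSpace.single i (1:ℝ) := by
    ext j
    rw [show ((∑ x : Fin d, v x • EuclideanSpace.single x (1:ℝ)) j) =
      ∑ x : Fin d, (v x • EuclideanSpace.single x (1:ℝ)) j from by rw [WithLp.ofLp_sum]; exact Finset.sum_apply j Finset.univ _]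
    simp [EuclideanSpace.single_apply]
  calc N v ≤ ∑ i : Fin d, N (v i • EuclideanSpace.single i (1:ℝ)) := by
        conv_lhs => rw [hv]
        exact aux_Nsum hN0 hNsmul hNtri _ _
    _ = ∑ i : Fin d, |v i| * N (EuclideanSpace.single i 1) := by
        simp [hNsmul]
    _ ≤ ∑ i : Fin d, ‖v‖ * N (EuclideanSpace.single i 1) := by
        refine Finset.sum_le_sum fun i _ => mul_le_mul_of_nonneg_right ?_
          (aux_Nnonneg hN0 hNsmul hNtri _)
        have h := abs_real_inner_le_norm (EuclideanSpace.single i (1:ℝ)) v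
        simpa [EuclideanSpace.inner_single_left, EuclideanSpace.norm_single] using h
    _ = (∑ i : Fin d, N (EuclideanSpace.single i 1)) * ‖v‖ := by
        rw [Finset.sum_mul]; simp [mul_comm]

private lemma aux_Ncont : Continuous N := by
  obtain ⟨C, hC0, hC⟩ := aux_Nle hN0 hNsmul hNtri
  have : LipschitzWith ⟨C, hC0⟩ N := by
    apply LipschitzWith.of_dist_le_mul
    intro a b
    have h1 : N a - N b ≤ N (a - b) := by
      have := hNtri (a - b) b; simp at this; linarith
    have h2 : N b - N a ≤ N (a - b) := by
      have := hNtri (b - a) a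
      have h3 : N (b - a) = N (a - b) := by
        rw [show b - a = (-1:ℝ) • (a - b) by module, hNsmul]; norm_num
      simp at this; linarith
    have : |N a - N b| ≤ N (a - b) := abs_sub_le_iff.mpr ⟨h1, h2⟩
    calc dist (N a) (N b) = |N a - N b| := rfl
      _ ≤ N (a - b) := this
      _ ≤ C * ‖a - b‖ := hC _
      _ = C * dist a b := by rw [dist_eq_norm]
  exact this.continuous

private lemma aux_Nlb : ∃ c : ℝ, 0 < c ∧ ∀ v, c * ‖v‖ ≤ N v := by
  by_cases hd : d = 0
  · exact ⟨1, one_pos, fun v => by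
      subst hd
      have : v = 0 := Subsingleton.elim v 0
      simp [this, (hN0 0).mpr rfl]⟩
  · haveI : Nonempty (Fin d) := ⟨⟨0, Nat.pos_of_ne_zero hd⟩⟩
    haveI : Nontrivial (EuclideanSpace ℝ (Fin d)) := by
      rcases exists_ne (0 : Fin d → ℝ) with ⟨f, hf⟩
      exact ⟨(WithLp.equiv 2 _).symm f, 0, by simpa using hf⟩
    obtain ⟨v0, hv0mem, hv0min⟩ := (isCompact_sphere (0 : EuclideanSpace ℝ (Fin d)) 1).exists_isMinOn
      (NormedSpace.sphere_nonempty.mpr zero_le_one)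
      ((aux_Ncont hN0 hNsmul hNtri).continuousOn)
    have hv0 : v0 ≠ 0 := by
      intro h
      rw [mem_sphere_iff_norm, h] at hv0mem; simp at hv0mem
    have hc : 0 < N v0 := lt_of_le_of_ne (aux_Nnonneg hN0 hNsmul hNtri v0)
      (fun h => hv0 ((hN0 v0).mp h.symm))
    refine ⟨N v0, hc, fun v => ?_⟩
    rcases eq_or_ne v 0 with rfl | hv
    · simp [(hN0 0).mpr rfl]
    · have hnv : 0 < ‖v‖ := norm_pos_iff.mpr hv
      have hmem : ‖v‖⁻¹ • v ∈ Metric.sphere (0 : EuclideanSpace ℝ (Fin d)) 1 := by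
        simp [norm_smul, abs_of_pos (inv_pos.mpr hnv), inv_mul_cancel₀ (ne_of_gt hnv)]
      have := hv0min hmem
      simp only [Set.mem_setOf_eq] at this
      have h2 : N (‖v‖⁻¹ • v) = ‖v‖⁻¹ * N v := by
        rw [hNsmul]; rw [abs_of_pos (inv_pos.mpr hnv)]
      rw [h2] at this
      calc N v0 * ‖v‖ ≤ (‖v‖⁻¹ * N v) * ‖v‖ := by
            exact mul_le_mul_of_nonneg_right this (le_of_lt hnv)
        _ = N v := by field_simp

private lemma aux_dual (Nd : EuclideanSpace ℝ (Fin d) → ℝ)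
    (hNd : ∀ u, Nd u = sSup {r : ℝ | ∃ v, N v ≤ 1 ∧ r = ⟪u, v⟫}) :
    ∀ u v, ⟪u, v⟫ ≤ Nd u * N v := by
  obtain ⟨c, hc, hlb⟩ := aux_Nlb hN0 hNsmul hNtri
  intro u v
  have hbdd : BddAbove {r : ℝ | ∃ v, N v ≤ 1 ∧ r = ⟪u, v⟫} := by
    refine ⟨‖u‖ / c, fun r hr => ?_⟩
    obtain ⟨v', hv', rfl⟩ := hr
    have h1 : ‖v'‖ ≤ 1 / c := by
      rw [le_div_iff₀ hc, mul_comm]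
      exact le_trans (hlb v') hv'
    calc ⟪u, v'⟫ ≤ ‖u‖ * ‖v'‖ := real_inner_le_norm u v'
      _ ≤ ‖u‖ * (1 / c) := mul_le_mul_of_nonneg_left h1 (norm_nonneg u)
      _ = ‖u‖ / c := by ring
  rcases eq_or_ne v 0 with rfl | hv
  · simp [(hN0 0).mpr rfl]
  · have hNv : 0 < N v :=
      lt_of_le_of_ne (aux_Nnonneg hN0 hNsmul hNtri v) (fun h => hv ((hN0 v).mp h.symm))
    have hmem : ⟪u, (N v)⁻¹ • v⟫ ∈ {r : ℝ | ∃ v', N v' ≤ 1 ∧ r = ⟪u, v'⟫} := by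
      refine ⟨(N v)⁻¹ • v, ?_, rfl⟩
      rw [hNsmul, abs_of_pos (inv_pos.mpr hNv), inv_mul_cancel₀ (ne_of_gt hNv)]
    have h2 : ⟪u, (N v)⁻¹ • v⟫ ≤ Nd u := by
      rw [hNd]; exact le_csSup hbdd hmem
    have h3 : ⟪u, (N v)⁻¹ • v⟫ = (N v)⁻¹ * ⟪u, v⟫ := real_inner_smul_right u v _
    rw [h3] at h2
    calc ⟪u, v⟫ = ((N v)⁻¹ * ⟪u, v⟫) * N v := by field_simp
      _ ≤ Nd u * N v := mul_le_mul_of_nonneg_right h2 (le_of_lt hNv)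
end


/-- Regret bound for (predictive) online mirror descent. Let `Q ⊆ ℝᵈ` be compact
convex, `φ` a `μ`-strongly convex DGF with respect to a norm `N` (with dual norm `Nd`),
differentiable on `Q` with gradient `gφ`, and `η > 0`. Given rewards `w t`, predictions `m t`,
and iterates `x t = Π_φ(η • m t, xt t)`, `xt (t+1) = Π_φ(η • w t, xt t)` (expressed as
maximizers of the proximal objectives), with `xt 0 = argmin_{z ∈ Q} φ z`, every comparator
`x* ∈ Q` satisfies
`∑_{t<T} ⟪x* - x t, w t⟫ ≤ D(x*, xt 0)/η + (η/(2μ)) ∑_{t<T} Nd (w t - m t) ^ 2`,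
where `D a b = φ a - φ b - ⟪gφ b, a - b⟫` is the Bregman divergence. -/
theorem stmt7 {d : ℕ} (T : ℕ)
    (Q : Set (EuclideanSpace ℝ (Fin d)))
    (hQconv : Convex ℝ Q) (hQcomp : IsCompact Q) (hQne : Q.Nonempty)
    (N : EuclideanSpace ℝ (Fin d) → ℝ)
    (hN0 : ∀ v, N v = 0 ↔ v = 0)
    (hNsmul : ∀ (a : ℝ) (v : EuclideanSpace ℝ (Fin d)), N (a • v) = |a| * N v)
    (hNtri : ∀ u v, N (u + v) ≤ N u + N v)
    (Nd : EuclideanSpace ℝ (Fin d) → ℝ)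
    (hNd : ∀ u, Nd u = sSup {r : ℝ | ∃ v, N v ≤ 1 ∧ r = ⟪u, v⟫})
    (μ : ℝ) (hμ : 0 < μ)
    (φ : EuclideanSpace ℝ (Fin d) → ℝ)
    (hφ : ∀ a ∈ Q, ∀ b ∈ Q, ∀ s : ℝ, 0 ≤ s → s ≤ 1 →
      φ (s • a + (1 - s) • b) ≤ s * φ a + (1 - s) * φ b - μ / 2 * (s * (1 - s)) * N (a - b) ^ 2)
    (gφ : EuclideanSpace ℝ (Fin d) → EuclideanSpace ℝ (Fin d))
    (hgφ : ∀ z ∈ Q, HasGradientAt φ (gφ z) z)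
    (D : EuclideanSpace ℝ (Fin d) → EuclideanSpace ℝ (Fin d) → ℝ)
    (hD : ∀ a b, D a b = φ a - φ b - ⟪gφ b, a - b⟫)
    (η : ℝ) (hη : 0 < η)
    (w m x xt : ℕ → EuclideanSpace ℝ (Fin d))
    (hxt0 : xt 0 ∈ Q ∧ ∀ z ∈ Q, φ (xt 0) ≤ φ z)
    (hx : ∀ t < T, x t ∈ Q ∧ ∀ z ∈ Q,
      ⟪η • m t, z⟫ - D z (xt t) ≤ ⟪η • m t, x t⟫ - D (x t) (xt t))
    (hxt : ∀ t < T, xt (t + 1) ∈ Q ∧ ∀ z ∈ Q,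
      ⟪η • w t, z⟫ - D z (xt t) ≤ ⟪η • w t, xt (t + 1)⟫ - D (xt (t + 1)) (xt t)) :
    ∀ xstar ∈ Q, ∑ t ∈ Finset.range T, ⟪xstar - x t, w t⟫ ≤
      D xstar (xt 0) / η + η / (2 * μ) * ∑ t ∈ Finset.range T, Nd (w t - m t) ^ 2 := by

  intro xstar hxstar
  have hdual : ∀ u v, ⟪u, v⟫ ≤ Nd u * N v := aux_dual hN0 hNsmul hNtri Nd hNd
  -- Bregman divergence lower bound from strong convexity
  have hDlb : ∀ a ∈ Q, ∀ b ∈ Q, μ / 2 * N (a - b) ^ 2 ≤ D a b := by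
    intro a ha b hb
    have hder : HasDerivAt (fun s : ℝ => φ (b + s • (a - b))) ⟪gφ b, a - b⟫ 0 :=
      aux_dirderiv (hgφ b hb)
    have hkey : ⟪gφ b, a - b⟫ ≤ φ a - φ b - μ / 2 * N (a - b) ^ 2 := by
      refine aux_slope hder (g := fun s => φ a - φ b - μ / 2 * (1 - s) * N (a - b) ^ 2)
        (fun s hs => ?_) ?_
      · have h1 := hφ a ha b hb s hs.1.le hs.2
        rw [show s • a + (1 - s) • b = b + s • (a - b) from by module] at h1
        show φ (b + s • (a - b)) - φ (b + (0:ℝ) • (a - b)) ≤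
          s * (φ a - φ b - μ / 2 * (1 - s) * N (a - b) ^ 2)
        simp only [zero_smul, add_zero]
        nlinarith [h1]
      · have hc : ContinuousAt (fun s : ℝ => φ a - φ b - μ / 2 * (1 - s) * N (a - b) ^ 2) 0 := by
          fun_prop
        have := hc.continuousWithinAt (s := Set.Ioi 0)
        simpa using this.tendsto
    rw [hD]
    linarith
  -- first-order optimality condition for the proximal steps
  have hFO : ∀ (g y xm : EuclideanSpace ℝ (Fin d)), xm ∈ Q →
      (∀ z ∈ Q, ⟪g, z⟫ - D z y ≤ ⟪g, xm⟫ - D xm y) →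
      ∀ z ∈ Q, ⟪g, z - xm⟫ - ⟪gφ xm, z - xm⟫ + ⟪gφ y, z - xm⟫ ≤ 0 := by
    intro g y xm hxm hmax z hz
    set v := z - xm with hv
    have hψeq : ∀ s : ℝ, ⟪g, xm + s • v⟫ - D (xm + s • v) y =
        (⟪g, xm⟫ + s * ⟪g, v⟫) - φ (xm + s • v) +
          (φ y + (⟪gφ y, xm⟫ + s * ⟪gφ y, v⟫ - ⟪gφ y, y⟫)) := by
      intro s
      rw [hD]
      simp only [inner_add_right, real_inner_smul_right, inner_sub_right]
      ring
    have hφd : HasDerivAt (fun s : ℝ => φ (xm + s • v)) ⟪gφ xm, v⟫ 0 :=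
      aux_dirderiv (hgφ xm hxm)
    have hlin1 : HasDerivAt (fun s : ℝ => ⟪g, xm⟫ + s * ⟪g, v⟫) ⟪g, v⟫ 0 := by
      simpa using ((hasDerivAt_id (0 : ℝ)).mul_const ⟪g, v⟫).const_add ⟪g, xm⟫
    have hlin2 : HasDerivAt
        (fun s : ℝ => φ y + (⟪gφ y, xm⟫ + s * ⟪gφ y, v⟫ - ⟪gφ y, y⟫)) ⟪gφ y, v⟫ 0 := by
      simpa using ((((hasDerivAt_id (0 : ℝ)).mul_const ⟪gφ y, v⟫).const_add
        ⟪gφ y, xm⟫).sub_const ⟪gφ y, y⟫).const_add (φ y)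
    have hder : HasDerivAt (fun s : ℝ => ⟪g, xm + s • v⟫ - D (xm + s • v) y)
        (⟪g, v⟫ - ⟪gφ xm, v⟫ + ⟪gφ y, v⟫) 0 := by
      have := (hlin1.sub hφd).add hlin2
      refine HasDerivAt.congr_of_eventuallyEq this ?_
      filter_upwards with s
      rw [hψeq s]; rfl
    refine aux_slope hder (g := fun _ => (0 : ℝ)) (fun s hs => ?_) tendsto_const_nhds
    have hmem : xm + s • v ∈ Q := by
      have := hQconv hz hxm hs.1.le (by linarith [hs.2] : (0 : ℝ) ≤ 1 - s) (by ring)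
      have heq : s • z + (1 - s) • xm = xm + s • v := by rw [hv]; module
      rwa [heq] at this
    have h1 := hmax (xm + s • v) hmem
    have h0 : xm + (0 : ℝ) • v = xm := by simp
    simp only [mul_zero]
    calc ⟪g, xm + s • v⟫ - D (xm + s • v) y - (⟪g, xm + (0:ℝ) • v⟫ - D (xm + (0:ℝ) • v) y)
        = ⟪g, xm + s • v⟫ - D (xm + s • v) y - (⟪g, xm⟫ - D xm y) := by rw [h0]
      _ ≤ 0 := by linarith
  -- memberships
  have hxtQ : ∀ t, t ≤ T → xt t ∈ Q := by
    intro t ht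
    cases t with
    | zero => exact hxt0.1
    | succ n => exact (hxt n (by omega)).1
  -- per-step inequality
  have hstep : ∀ t < T, η * ⟪xstar - x t, w t⟫ ≤
      D xstar (xt t) - D xstar (xt (t + 1)) + η ^ 2 / (2 * μ) * Nd (w t - m t) ^ 2 := by
    intro t ht
    have hxQ : x t ∈ Q := (hx t ht).1
    have hyQ : xt t ∈ Q := hxtQ t (le_of_lt ht)
    have hnQ : xt (t + 1) ∈ Q := (hxt t ht).1
    have FO1 := hFO (η • m t) (xt t) (x t) hxQ (hx t ht).2 (xt (t + 1)) hnQ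
    have FO2 := hFO (η • w t) (xt t) (xt (t + 1)) hnQ (hxt t ht).2 xstar hxstar
    have hfy0 : ⟪w t - m t, xt (t + 1) - x t⟫ ≤ Nd (w t - m t) * N (xt (t + 1) - x t) :=
      hdual _ _
    have hfy1 : η * ⟪w t - m t, xt (t + 1) - x t⟫ ≤
        η ^ 2 / (2 * μ) * Nd (w t - m t) ^ 2 + μ / 2 * N (xt (t + 1) - x t) ^ 2 := by
      have h2μ : (0:ℝ) < 2 * μ := by linarith
      have key : 2 * μ * (η * ⟪w t - m t, xt (t + 1) - x t⟫) ≤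
          η ^ 2 * Nd (w t - m t) ^ 2 + μ ^ 2 * N (xt (t + 1) - x t) ^ 2 := by
        nlinarith [sq_nonneg (η * Nd (w t - m t) - μ * N (xt (t + 1) - x t)),
          mul_le_mul_of_nonneg_left (mul_le_mul_of_nonneg_left hfy0 hη.le) h2μ.le]
      have h4 : η * ⟪w t - m t, xt (t + 1) - x t⟫ ≤
          (η ^ 2 * Nd (w t - m t) ^ 2 + μ ^ 2 * N (xt (t + 1) - x t) ^ 2) / (2 * μ) := by
        rw [le_div_iff₀ h2μ]; linarith
      have h5 : (η ^ 2 * Nd (w t - m t) ^ 2 + μ ^ 2 * N (xt (t + 1) - x t) ^ 2) / (2 * μ) =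
          η ^ 2 / (2 * μ) * Nd (w t - m t) ^ 2 + μ / 2 * N (xt (t + 1) - x t) ^ 2 := by
        field_simp
      linarith
    have hlb1 := hDlb (xt (t + 1)) hnQ (x t) hxQ
    have hlb2 := hDlb (x t) hxQ (xt t) hyQ
    have hsq2 : (0:ℝ) ≤ μ / 2 * N (x t - xt t) ^ 2 := by positivity
    have hDe : ∀ a b, D a b = φ a - φ b - ⟪gφ b, a⟫ + ⟪gφ b, b⟫ := by
      intro a b; rw [hD, inner_sub_right]; ring
    have hcg : ⟪xstar - x t, w t⟫ = ⟪w t, xstar⟫ - ⟪w t, x t⟫ := by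
      rw [real_inner_comm, inner_sub_right]
    simp only [inner_add_left, inner_sub_left, inner_sub_right, real_inner_smul_left] at FO1 FO2 hfy1
    rw [hcg, hDe xstar (xt t), hDe xstar (xt (t+1))]
    rw [hDe (xt (t+1)) (x t)] at hlb1
    rw [hDe (x t) (xt t)] at hlb2
    linarith
  -- summation and telescoping
  have hsum : η * ∑ t ∈ Finset.range T, ⟪xstar - x t, w t⟫ ≤
      D xstar (xt 0) - D xstar (xt T) +
        η ^ 2 / (2 * μ) * ∑ t ∈ Finset.range T, Nd (w t - m t) ^ 2 := by
    have h1 : ∑ t ∈ Finset.range T, (η * ⟪xstar - x t, w t⟫) ≤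
        ∑ t ∈ Finset.range T, (D xstar (xt t) - D xstar (xt (t + 1)) +
          η ^ 2 / (2 * μ) * Nd (w t - m t) ^ 2) :=
      Finset.sum_le_sum fun t ht => hstep t (Finset.mem_range.mp ht)
    rw [Finset.sum_add_distrib, Finset.sum_range_sub' (fun t => D xstar (xt t)) T,
      ← Finset.mul_sum, ← Finset.mul_sum] at h1
    exact h1
  have hDT : 0 ≤ D xstar (xt T) := by
    have := hDlb xstar hxstar (xt T) (hxtQ T le_rfl)
    have h2 : (0:ℝ) ≤ μ / 2 * N (xstar - xt T) ^ 2 := by positivity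
    linarith
  have hfin : ∑ t ∈ Finset.range T, ⟪xstar - x t, w t⟫ ≤
      (D xstar (xt 0) + η ^ 2 / (2 * μ) * ∑ t ∈ Finset.range T, Nd (w t - m t) ^ 2) / η := by
    rw [le_div_iff₀ hη]
    nlinarith [hsum]
  have heq : (D xstar (xt 0) + η ^ 2 / (2 * μ) * ∑ t ∈ Finset.range T, Nd (w t - m t) ^ 2) / η =
      D xstar (xt 0) / η + η / (2 * μ) * ∑ t ∈ Finset.range T, Nd (w t - m t) ^ 2 := by
    field_simp
  linarith [hfin, heq ▸ hfin]
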